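/- The Lebesgue measure in ℝ⁴ of the set { (a, b₁, b₂, b₃) : b₁ ≤ 0, b₂ ≤ a, b₃ ≤ a, b₂ + b₃ ≥ a, and 3a − (b₁ + b₂ + b₃) ≤ 1 } equals 1/96. -/

import Mathlib

open MeasureTheory Set


lemma ofReal_max_zero (r : ℝ) : ENNReal.ofReal (max r 0) = ENNReal.ofReal r := by
  rcases le_total r 0 with h | h
  · rw [max_eq_right h, ENNReal.ofReal_zero, ENNReal.ofReal_eq_zero.2 h]
  · rw [max_eq_left h]

lemma keyK (n : ℕ) {c A : ℝ} (hc : 0 < c) (hA : 0 ≤ A) (r : ℝ) :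
    ∫⁻ z in Set.Ici (0:ℝ), ENNReal.ofReal ((max (r - c * z) 0) ^ (n + 1) * A) =
    ENNReal.ofReal ((max r 0) ^ (n + 2) * A / (c * (n + 2))) := by
  rcases le_or_gt r 0 with hr | hr
  · have h1 : ∀ z ∈ Set.Ici (0:ℝ),
        ENNReal.ofReal ((max (r - c * z) 0) ^ (n + 1) * A) = 0 := by
      intro z hz
      have : max (r - c * z) 0 = 0 := max_eq_right (by nlinarith [hz.out])
      simp [this]
    rw [setLIntegral_congr_fun measurableSet_Ici h1]
    simp [max_eq_right hr]
  · have hrc : 0 ≤ r / c := le_of_lt (div_pos hr hc)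
    have hsplit : Set.Ici (0:ℝ) = Set.Icc 0 (r / c) ∪ Set.Ioi (r / c) :=
      (Set.Icc_union_Ioi_eq_Ici hrc).symm
    have hdisj : Disjoint (Set.Icc (0:ℝ) (r / c)) (Set.Ioi (r / c)) := by
      rw [Set.disjoint_left]; intro z hz hz'; exact absurd hz.2 (not_le.2 hz')
    rw [hsplit, lintegral_union measurableSet_Ioi hdisj]
    have h2 : ∀ z ∈ Set.Ioi (r / c),
        ENNReal.ofReal ((max (r - c * z) 0) ^ (n + 1) * A) = 0 := by
      intro z hz
      have hz' : r / c < z := hz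
      have : max (r - c * z) 0 = 0 := by
        apply max_eq_right
        have := (div_lt_iff₀ hc).1 hz'
        nlinarith
      simp [this]
    rw [setLIntegral_congr_fun measurableSet_Ioi h2, lintegral_zero, add_zero]
    have h3 : ∀ z ∈ Set.Icc (0:ℝ) (r / c),
        ENNReal.ofReal ((max (r - c * z) 0) ^ (n + 1) * A) =
        ENNReal.ofReal ((r - c * z) ^ (n + 1) * A) := by
      intro z hz
      have : 0 ≤ r - c * z := by
        have := (le_div_iff₀ hc).1 hz.2
        nlinarith
      rw [max_eq_left this]
    rw [setLIntegral_congr_fun measurableSet_Icc h3]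
    have hcont : Continuous fun z : ℝ => (r - c * z) ^ (n + 1) * A :=
      ((continuous_const.sub (continuous_const.mul continuous_id)).pow _).mul continuous_const
    have hint : IntegrableOn (fun z : ℝ => (r - c * z) ^ (n + 1) * A) (Set.Icc 0 (r / c)) :=
      hcont.integrableOn_Icc
    have hnonneg : 0 ≤ᵐ[volume.restrict (Set.Icc (0:ℝ) (r / c))]
        fun z : ℝ => (r - c * z) ^ (n + 1) * A := by
      refine (ae_restrict_iff' measurableSet_Icc).2 (ae_of_all _ ?_)
      intro z hz
      have : 0 ≤ r - c * z := by
        have := (le_div_iff₀ hc).1 hz.2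
        nlinarith
      positivity
    rw [← ofReal_integral_eq_lintegral_ofReal hint hnonneg]
    congr 1
    have hF : ∀ z : ℝ, HasDerivAt (fun z : ℝ => (r - c * z) ^ (n + 2) * (-A / (c * (n + 2))))
        ((r - c * z) ^ (n + 1) * A) z := by
      intro z
      have h1 : HasDerivAt (fun z : ℝ => r - c * z) (-c) z := by
        simpa using ((hasDerivAt_id z).const_mul c).const_sub r
      have h2 := (h1.fun_pow (n + 2)).mul_const (-A / (c * (n + 2)))
      refine h2.congr_deriv ?_
      have hc' : (c : ℝ) ≠ 0 := ne_of_gt hc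
      have hn : ((n : ℝ) + 2) ≠ 0 := by positivity
      push_cast [Nat.add_sub_cancel]
      field_simp
    rw [MeasureTheory.integral_Icc_eq_integral_Ioc,
      ← intervalIntegral.integral_of_le hrc,
      intervalIntegral.integral_eq_sub_of_hasDerivAt (fun z _ => hF z)
        (hcont.intervalIntegrable _ _)]
    have : r - c * (r / c) = 0 := by field_simp; ring
    rw [this, max_eq_left (le_of_lt hr)]
    have hc' : (c : ℝ) ≠ 0 := ne_of_gt hc
    have hn : ((n : ℝ) + 2) ≠ 0 := by positivity
    field_simp
    simp



noncomputable def eAux : (Fin 4 → ℝ) ≃ₗ[ℝ] ℝ × ℝ × ℝ × ℝ :=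
  LinearEquiv.ofLinear
    { toFun := fun v => (v 0, v 1, v 2, v 3)
      map_add' := fun _ _ => rfl
      map_smul' := fun _ _ => rfl }
    { toFun := fun p => ![p.1, p.2.1, p.2.2.1, p.2.2.2]
      map_add' := by intro p q; funext i; fin_cases i <;> rfl
      map_smul' := by intro c p; funext i; fin_cases i <;> rfl }
    (by apply LinearMap.ext; intro p; rfl)
    (by apply LinearMap.ext; intro v; funext i; fin_cases i <;> rfl)

noncomputable def Mmat : Matrix (Fin 4) (Fin 4) ℝ :=
  !![1,0,1,1; 0,-1,0,0; 1,0,0,1; 1,0,1,0]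

noncomputable def Tmap : (ℝ × ℝ × ℝ × ℝ) →ₗ[ℝ] ℝ × ℝ × ℝ × ℝ :=
  (eAux : (Fin 4 → ℝ) →ₗ[ℝ] ℝ × ℝ × ℝ × ℝ) ∘ₗ Matrix.toLin' Mmat ∘ₗ
    (eAux.symm : (ℝ × ℝ × ℝ × ℝ) →ₗ[ℝ] Fin 4 → ℝ)

lemma det_Tmap : LinearMap.det Tmap = -1 := by
  rw [Tmap, LinearMap.det_conj, LinearMap.det_toLin']
  simp [Mmat, Matrix.det_succ_row_zero, Fin.sum_univ_succ, Fin.succAbove, Matrix.cons_val]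
  norm_num

lemma Tmap_apply (q : ℝ × ℝ × ℝ × ℝ) :
    Tmap q = (q.1 + q.2.2.1 + q.2.2.2, -q.2.1, q.1 + q.2.2.2, q.1 + q.2.2.1) := by
  obtain ⟨x, y, z, w⟩ := q
  simp [Tmap, eAux, Mmat, Matrix.toLin'_apply, Matrix.mulVec, dotProduct,
    Fin.sum_univ_four, LinearEquiv.ofLinear_symm_apply]


lemma vol1 (t : ℝ) : volume {w : ℝ | 0 ≤ w ∧ t + 2 * w ≤ 1} =
    ENNReal.ofReal ((1 - t) / 2) := by
  have : {w : ℝ | 0 ≤ w ∧ t + 2 * w ≤ 1} = Set.Icc 0 ((1 - t) / 2) := by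
    ext w
    simp only [Set.mem_setOf_eq, Set.mem_Icc]
    constructor <;> rintro ⟨h1, h2⟩ <;> exact ⟨h1, by linarith⟩
  rw [this, Real.volume_Icc]
  norm_num

lemma vol2 (t : ℝ) : volume {q : ℝ × ℝ | 0 ≤ q.1 ∧ 0 ≤ q.2 ∧ t + 2 * q.1 + 2 * q.2 ≤ 1} =
    ENNReal.ofReal ((max (1 - t) 0) ^ 2 / 8) := by
  have hS : MeasurableSet {q : ℝ × ℝ | 0 ≤ q.1 ∧ 0 ≤ q.2 ∧ t + 2 * q.1 + 2 * q.2 ≤ 1} := by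
    apply MeasurableSet.inter
    · exact measurableSet_le measurable_const measurable_fst
    apply MeasurableSet.inter
    · exact measurableSet_le measurable_const measurable_snd
    · exact measurableSet_le (((measurable_const.add (measurable_fst.const_mul 2)).add (measurable_snd.const_mul 2))) measurable_const
  rw [Measure.volume_eq_prod, Measure.prod_apply hS]
  have hslice : ∀ z : ℝ, volume (Prod.mk z ⁻¹' {q : ℝ × ℝ | 0 ≤ q.1 ∧ 0 ≤ q.2 ∧
      t + 2 * q.1 + 2 * q.2 ≤ 1}) =
      Set.indicator (Set.Ici 0) (fun z => ENNReal.ofReal ((1 - (t + 2 * z)) / 2)) z := by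
    intro z
    by_cases hz : 0 ≤ z
    · have : Prod.mk z ⁻¹' {q : ℝ × ℝ | 0 ≤ q.1 ∧ 0 ≤ q.2 ∧ t + 2 * q.1 + 2 * q.2 ≤ 1} =
          {w : ℝ | 0 ≤ w ∧ (t + 2 * z) + 2 * w ≤ 1} := by
        ext w
        simp only [Set.mem_preimage, Set.mem_setOf_eq, hz, true_and]
      rw [this, vol1]
      exact (Set.indicator_of_mem hz (fun z => ENNReal.ofReal ((1 - (t + 2 * z)) / 2))).symm
    · have : Prod.mk z ⁻¹' {q : ℝ × ℝ | 0 ≤ q.1 ∧ 0 ≤ q.2 ∧ t + 2 * q.1 + 2 * q.2 ≤ 1} =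
          (∅ : Set ℝ) := by
        ext w
        simp only [Set.mem_preimage, Set.mem_setOf_eq, Set.mem_empty_iff_false, iff_false]
        rintro ⟨h1, _⟩; exact hz h1
      rw [this, measure_empty]
      exact (Set.indicator_of_notMem hz (fun z => ENNReal.ofReal ((1 - (t + 2 * z)) / 2))).symm
  rw [lintegral_congr hslice, lintegral_indicator measurableSet_Ici _]
  have heq : ∀ z : ℝ, ENNReal.ofReal ((1 - (t + 2 * z)) / 2) =
      ENNReal.ofReal ((max ((1 - t) - 2 * z) 0) ^ (0 + 1) * (1 / 2)) := by
    intro z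
    rw [pow_one, ← ofReal_max_zero ((1 - (t + 2 * z)) / 2)]
    congr 1
    rcases le_total ((1 - t) - 2 * z) 0 with h | h
    · rw [max_eq_right h, max_eq_right (by linarith)]; ring
    · rw [max_eq_left h, max_eq_left (by linarith)]; ring
  rw [lintegral_congr fun z => heq z, keyK 0 (by norm_num) (by norm_num) (1 - t)]
  norm_num
  congr 1
  ring


lemma vol3 (t : ℝ) : volume {q : ℝ × ℝ × ℝ | 0 ≤ q.1 ∧ 0 ≤ q.2.1 ∧ 0 ≤ q.2.2 ∧
    t + q.1 + 2 * q.2.1 + 2 * q.2.2 ≤ 1} =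
    ENNReal.ofReal ((max (1 - t) 0) ^ 3 / 24) := by
  have hS : MeasurableSet {q : ℝ × ℝ × ℝ | 0 ≤ q.1 ∧ 0 ≤ q.2.1 ∧ 0 ≤ q.2.2 ∧
      t + q.1 + 2 * q.2.1 + 2 * q.2.2 ≤ 1} := by
    apply MeasurableSet.inter
    · exact measurableSet_le measurable_const measurable_fst
    apply MeasurableSet.inter
    · exact measurableSet_le measurable_const (measurable_fst.comp measurable_snd)
    apply MeasurableSet.inter
    · exact measurableSet_le measurable_const (measurable_snd.comp measurable_snd)
    · exact measurableSet_le
        (((measurable_const.add measurable_fst).add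
          ((measurable_fst.comp measurable_snd).const_mul 2)).add
          ((measurable_snd.comp measurable_snd).const_mul 2)) measurable_const
  rw [Measure.volume_eq_prod, Measure.prod_apply hS]
  have hslice : ∀ y : ℝ, (volume : Measure (ℝ × ℝ))
      (Prod.mk y ⁻¹' {q : ℝ × ℝ × ℝ | 0 ≤ q.1 ∧ 0 ≤ q.2.1 ∧ 0 ≤ q.2.2 ∧
        t + q.1 + 2 * q.2.1 + 2 * q.2.2 ≤ 1}) =
      Set.indicator (Set.Ici 0)
        (fun y => ENNReal.ofReal ((max (1 - (t + y)) 0) ^ 2 / 8)) y := by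
    intro y
    by_cases hy : 0 ≤ y
    · have : Prod.mk y ⁻¹' {q : ℝ × ℝ × ℝ | 0 ≤ q.1 ∧ 0 ≤ q.2.1 ∧ 0 ≤ q.2.2 ∧
          t + q.1 + 2 * q.2.1 + 2 * q.2.2 ≤ 1} =
          {q : ℝ × ℝ | 0 ≤ q.1 ∧ 0 ≤ q.2 ∧ (t + y) + 2 * q.1 + 2 * q.2 ≤ 1} := by
        ext q
        simp only [Set.mem_preimage, Set.mem_setOf_eq, hy, true_and]
      rw [this, vol2]
      exact (Set.indicator_of_mem hy
        (fun y => ENNReal.ofReal ((max (1 - (t + y)) 0) ^ 2 / 8))).symm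
    · have : Prod.mk y ⁻¹' {q : ℝ × ℝ × ℝ | 0 ≤ q.1 ∧ 0 ≤ q.2.1 ∧ 0 ≤ q.2.2 ∧
          t + q.1 + 2 * q.2.1 + 2 * q.2.2 ≤ 1} = (∅ : Set (ℝ × ℝ)) := by
        ext q
        simp only [Set.mem_preimage, Set.mem_setOf_eq, Set.mem_empty_iff_false, iff_false]
        rintro ⟨h1, _⟩; exact hy h1
      rw [this, measure_empty]
      exact (Set.indicator_of_notMem hy
        (fun y => ENNReal.ofReal ((max (1 - (t + y)) 0) ^ 2 / 8))).symm
  rw [lintegral_congr hslice, lintegral_indicator measurableSet_Ici _]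
  have heq : ∀ y : ℝ, ENNReal.ofReal ((max (1 - (t + y)) 0) ^ 2 / 8) =
      ENNReal.ofReal ((max ((1 - t) - 1 * y) 0) ^ (1 + 1) * (1 / 8)) := by
    intro y
    have harg : (1 : ℝ) - (t + y) = (1 - t) - 1 * y := by ring
    rw [harg]
    congr 1
    ring
  rw [lintegral_congr fun y => heq y, keyK 1 (by norm_num) (by norm_num) (1 - t)]
  norm_num
  congr 1
  ring

def deltaSet : Set (ℝ × ℝ × ℝ × ℝ) :=
  {q | 0 ≤ q.1 ∧ 0 ≤ q.2.1 ∧ 0 ≤ q.2.2.1 ∧ 0 ≤ q.2.2.2 ∧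
    q.1 + q.2.1 + 2 * q.2.2.1 + 2 * q.2.2.2 ≤ 1}

lemma measurableSet_deltaSet : MeasurableSet deltaSet := by
  unfold deltaSet
  apply MeasurableSet.inter
  · exact measurableSet_le measurable_const measurable_fst
  apply MeasurableSet.inter
  · exact measurableSet_le measurable_const (measurable_fst.comp measurable_snd)
  apply MeasurableSet.inter
  · exact measurableSet_le measurable_const
      (measurable_fst.comp (measurable_snd.comp measurable_snd))
  apply MeasurableSet.inter
  · exact measurableSet_le measurable_const
      (measurable_snd.comp (measurable_snd.comp measurable_snd))
  · exact measurableSet_le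
      (((measurable_fst.add (measurable_fst.comp measurable_snd)).add
        ((measurable_fst.comp (measurable_snd.comp measurable_snd)).const_mul 2)).add
        ((measurable_snd.comp (measurable_snd.comp measurable_snd)).const_mul 2))
      measurable_const

lemma vol_deltaSet : volume deltaSet = ENNReal.ofReal (1 / 96) := by
  rw [Measure.volume_eq_prod, Measure.prod_apply measurableSet_deltaSet]
  have hslice : ∀ x : ℝ, (volume : Measure (ℝ × ℝ × ℝ)) (Prod.mk x ⁻¹' deltaSet) =
      Set.indicator (Set.Ici 0) (fun x => ENNReal.ofReal ((max (1 - x) 0) ^ 3 / 24)) x := by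
    intro x
    by_cases hx : 0 ≤ x
    · have : Prod.mk x ⁻¹' deltaSet = {q : ℝ × ℝ × ℝ | 0 ≤ q.1 ∧ 0 ≤ q.2.1 ∧ 0 ≤ q.2.2 ∧
          x + q.1 + 2 * q.2.1 + 2 * q.2.2 ≤ 1} := by
        ext q
        simp only [deltaSet, Set.mem_preimage, Set.mem_setOf_eq, hx, true_and]
      rw [this, vol3]
      exact (Set.indicator_of_mem hx
        (fun x => ENNReal.ofReal ((max (1 - x) 0) ^ 3 / 24))).symm
    · have : Prod.mk x ⁻¹' deltaSet = (∅ : Set (ℝ × ℝ × ℝ)) := by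
        ext q
        simp only [deltaSet, Set.mem_preimage, Set.mem_setOf_eq, Set.mem_empty_iff_false,
          iff_false]
        rintro ⟨h1, _⟩; exact hx h1
      rw [this, measure_empty]
      exact (Set.indicator_of_notMem hx
        (fun x => ENNReal.ofReal ((max (1 - x) 0) ^ 3 / 24))).symm
  rw [lintegral_congr hslice, lintegral_indicator measurableSet_Ici _]
  have heq : ∀ x : ℝ, ENNReal.ofReal ((max (1 - x) 0) ^ 3 / 24) =
      ENNReal.ofReal ((max ((1 : ℝ) - 1 * x) 0) ^ (2 + 1) * (1 / 24)) := by
    intro x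
    have harg : (1 : ℝ) - x = 1 - 1 * x := by ring
    rw [harg]
    congr 1
    ring
  rw [lintegral_congr fun x => heq x, keyK 2 (by norm_num) (by norm_num) 1]
  norm_num

lemma chamberImage_eq : Tmap '' deltaSet =
    {p : ℝ × ℝ × ℝ × ℝ |
        p.2.1 ≤ 0 ∧ p.2.2.1 ≤ p.1 ∧ p.2.2.2 ≤ p.1 ∧ p.1 ≤ p.2.2.1 + p.2.2.2 ∧
        3 * p.1 - (p.2.1 + p.2.2.1 + p.2.2.2) ≤ 1} := by
  ext ⟨a, b1, b2, b3⟩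
  constructor
  · rintro ⟨⟨x, y, z, w⟩, ⟨hx, hy, hz, hw, hsum⟩, hT⟩
    rw [Tmap_apply] at hT
    simp only [Prod.mk.injEq] at hT
    obtain ⟨h1, h2, h3, h4⟩ := hT
    simp only [Set.mem_setOf_eq]
    refine ⟨by linarith, by linarith, by linarith, by linarith, by linarith⟩
  · rintro ⟨h1, h2, h3, h4, h5⟩
    refine ⟨(b2 + b3 - a, -b1, a - b2, a - b3),
      ⟨by dsimp; linarith, by dsimp; linarith, by dsimp; linarith, by dsimp; linarith,
        by dsimp; linarith⟩, ?_⟩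
    rw [Tmap_apply]
    simp only [Prod.mk.injEq]
    refine ⟨by ring, by ring, by ring, by ring⟩

/-- The Zariski chamber on `S₃` supported on the maximal negative definite system
`{E₁, L − E₂ − E₃}`: the Lebesgue measure in `ℝ⁴` of
`{(a, b₁, b₂, b₃) : b₁ ≤ 0, b₂ ≤ a, b₃ ≤ a, b₂ + b₃ ≥ a, 3a − (b₁+b₂+b₃) ≤ 1}`
equals `1/96`. -/
theorem chamber_volume_S3_maximal :
    volume {p : ℝ × ℝ × ℝ × ℝ |
        p.2.1 ≤ 0 ∧ p.2.2.1 ≤ p.1 ∧ p.2.2.2 ≤ p.1 ∧ p.1 ≤ p.2.2.1 + p.2.2.2 ∧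
        3 * p.1 - (p.2.1 + p.2.2.1 + p.2.2.2) ≤ 1} =
      ENNReal.ofReal (1 / 96) := by
  haveI h2 : (volume : Measure (ℝ × ℝ)).IsAddHaarMeasure :=
    Measure.prod.instIsAddHaarMeasure volume volume
  haveI h3 : (volume : Measure (ℝ × ℝ × ℝ)).IsAddHaarMeasure :=
    Measure.prod.instIsAddHaarMeasure volume volume
  haveI h4 : (volume : Measure (ℝ × ℝ × ℝ × ℝ)).IsAddHaarMeasure :=
    Measure.prod.instIsAddHaarMeasure volume volume
  rw [← chamberImage_eq, Measure.addHaar_image_linearMap (μ := volume) Tmap deltaSet,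
    det_Tmap, vol_deltaSet]
  norm_num
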